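/- If a strictly feasible pair exists, then at every minimizer (p*, y*) of the multi-slot network delay, whenever y*_{q,i} > 0 on an energy link q with start node a and end node b at slot i, one has g_l(p*_{l,i}) = α_q · g_m(p*_{m,i}) for every data link l outgoing from a and every data link m outgoing from b, where g_l(p) = (t_l/(2σ_l)) · ((1/2)·ln(1 + p/σ_l) − t_l)^{−2} · (1 + p/σ_l)^{−1}. -/

import Mathlib

open BigOperators ENNReal

/-- A multi-slot energy harvesting network with energy cooperation: nodes `N`, data
links `L` (start node, fixed flow `t l > 0`, noise power `σ l > 0`), energy links `Q`
(start node, end node, efficiency `α q ∈ (0,1]`), `T` time slots and harvested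
energies `E n i ≥ 0` at node `n` in slot `i`. -/
structure NetT where
  N : Type
  L : Type
  Q : Type
  [fintypeN : Fintype N]
  [fintypeL : Fintype L]
  [fintypeQ : Fintype Q]
  [decEqN : DecidableEq N]
  T : ℕ
  startD : L → N
  startE : Q → N
  endE : Q → N
  α : Q → ℝ
  t : L → ℝ
  σ : L → ℝ
  E : N → Fin T → ℝ
  hα : ∀ q, 0 < α q ∧ α q ≤ 1
  ht : ∀ l, 0 < t l
  hσ : ∀ l, 0 < σ l
  hE : ∀ n i, 0 ≤ E n i

attribute [instance] NetT.fintypeN NetT.fintypeL NetT.fintypeQ NetT.decEqN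

/-- Feasibility of `(p, y)`: nonnegative energy transfers, link powers at least
`σ_l (e^{2 t_l} − 1)` in every slot, and the cumulative (energy-causality)
constraint at every node `n` and every slot `k`. -/
def NetT.Feasible (net : NetT) (p : net.L → Fin net.T → ℝ)
    (y : net.Q → Fin net.T → ℝ) : Prop :=
  (∀ q i, 0 ≤ y q i) ∧
  (∀ l i, net.σ l * (Real.exp (2 * net.t l) - 1) ≤ p l i) ∧
  (∀ (n : net.N) (k : Fin net.T),
    (∑ i ∈ Finset.Iic k,
      ((∑ l ∈ Finset.univ.filter (fun l => net.startD l = n), p l i) +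
        (∑ q ∈ Finset.univ.filter (fun q => net.startE q = n), y q i))) ≤
    ∑ i ∈ Finset.Iic k,
      (net.E n i + ∑ q ∈ Finset.univ.filter (fun q => net.endE q = n), net.α q * y q i))

/-- Strict feasibility: feasible with `p_{l,i} > σ_l (e^{2 t_l} − 1)` for all `l, i`. -/
def NetT.StrictFeasible (net : NetT) (p : net.L → Fin net.T → ℝ)
    (y : net.Q → Fin net.T → ℝ) : Prop :=
  net.Feasible p y ∧ ∀ l i, net.σ l * (Real.exp (2 * net.t l) - 1) < p l i

/-- The multi-slot network delay, `+∞` if some denominator is nonpositive. -/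
noncomputable def NetT.Delay (net : NetT) (p : net.L → Fin net.T → ℝ) : ℝ≥0∞ :=
  if ∀ l i, net.t l < (1 / 2) * Real.log (1 + p l i / net.σ l) then
    ENNReal.ofReal
      (∑ i, ∑ l, net.t l / ((1 / 2) * Real.log (1 + p l i / net.σ l) - net.t l))
  else ⊤

/-- A minimizer of the multi-slot network delay over feasible pairs. -/
def NetT.IsMinimizer (net : NetT) (p : net.L → Fin net.T → ℝ)
    (y : net.Q → Fin net.T → ℝ) : Prop :=
  net.Feasible p y ∧ ∀ p' y', net.Feasible p' y' → net.Delay p ≤ net.Delay p'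

/-- The marginal quantity
`g(p) = (t/(2σ)) · ((1/2)·ln(1 + p/σ) − t)^{−2} · (1 + p/σ)^{−1}`. -/
noncomputable def gMarg (t σ p : ℝ) : ℝ :=
  t / (2 * σ) / ((1 / 2) * Real.log (1 + p / σ) - t) ^ 2 / (1 + p / σ)

lemma exp2_sub_one_pos {t : ℝ} (ht : 0 < t) : 0 < Real.exp (2*t) - 1 := by
  nlinarith [Real.add_one_lt_exp (show (2*t) ≠ 0 by positivity)]

lemma cond_of_floor_lt {t σ p : ℝ} (hσ : 0 < σ) (ht : 0 < t)
    (h : σ * (Real.exp (2 * t) - 1) < p) : t < (1/2) * Real.log (1 + p / σ) := by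
  have h0 : 0 < σ * (Real.exp (2*t) - 1) := by
    have := exp2_sub_one_pos ht; positivity
  have hp : 0 < p := lt_trans h0 h
  have hpos : (0:ℝ) < 1 + p / σ := by positivity
  have h3 : Real.exp (2*t) < 1 + p / σ := by
    have : Real.exp (2*t) - 1 < p / σ := by
      rw [lt_div_iff₀ hσ]; nlinarith
    linarith
  have := (Real.lt_log_iff_exp_lt hpos).mpr h3
  linarith

lemma floor_lt_of_cond {t σ p : ℝ} (hσ : 0 < σ) (hpos : 0 < 1 + p / σ)
    (h : t < (1/2) * Real.log (1 + p / σ)) : σ * (Real.exp (2 * t) - 1) < p := by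
  have h2 : 2 * t < Real.log (1 + p / σ) := by linarith
  have h3 := (Real.lt_log_iff_exp_lt hpos).mp h2
  have h4 : Real.exp (2*t) - 1 < p / σ := by linarith
  calc σ * (Real.exp (2*t) - 1) < σ * (p/σ) := by nlinarith
    _ = p := by field_simp

noncomputable def fTerm (t σ x : ℝ) : ℝ := t / ((1/2) * Real.log (1 + x/σ) - t)

lemma fTerm_hasDerivAt {t σ x : ℝ} (hσ : 0 < σ) (hx : 0 < 1 + x/σ)
    (hden : (1/2) * Real.log (1 + x/σ) - t ≠ 0) :
    HasDerivAt (fTerm t σ) (-gMarg t σ x) x := by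
  have h1 : HasDerivAt (fun y : ℝ => 1 + y/σ) (1/σ) x := by
    simpa using ((hasDerivAt_id x).div_const σ).const_add 1
  have h2 : HasDerivAt (fun y : ℝ => (1/2) * Real.log (1 + y/σ) - t)
      ((1/2) * (1/σ / (1 + x/σ))) x := by
    have := (h1.log (ne_of_gt hx)).const_mul (1/2 : ℝ)
    simpa using this.sub_const t
  have h3 := (hasDerivAt_const x t).div h2 hden
  have : HasDerivAt (fTerm t σ)
      ((0 * ((1/2) * Real.log (1 + x/σ) - t) - t * ((1/2) * (1/σ / (1 + x/σ)))) /
        ((1/2) * Real.log (1 + x/σ) - t) ^ 2) x := h3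
  convert this using 1
  rw [gMarg]
  ring

/-- If a strictly feasible pair exists, then at every minimizer
`(p*, y*)` of the multi-slot network delay, whenever `y*_{q,i} > 0` on an energy link
`q` from node `a` to node `b` at slot `i`, one has
`g_l(p*_{l,i}) = α_q · g_m(p*_{m,i})` for every data link `l` outgoing from `a` and
every data link `m` outgoing from `b`. -/
theorem multislot_minimizer_energy_transfer_marginals (net : NetT)
    (hsf : ∃ p y, net.StrictFeasible p y)
    (pstar : net.L → Fin net.T → ℝ) (ystar : net.Q → Fin net.T → ℝ)
    (hmin : net.IsMinimizer pstar ystar) :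
    ∀ (q : net.Q) (i : Fin net.T), 0 < ystar q i →
      ∀ l m : net.L, net.startD l = net.startE q → net.startD m = net.endE q →
        gMarg (net.t l) (net.σ l) (pstar l i) =
          net.α q * gMarg (net.t m) (net.σ m) (pstar m i) := by
  intro q i hy l m hl hm
  classical
  obtain ⟨p0, y0, h0feas, h0strict⟩ := hsf
  obtain ⟨hα0, hα1⟩ := net.hα q
  -- finiteness and strict interiority of pstar
  have hcond0 : ∀ l' i', net.t l' < (1/2) * Real.log (1 + p0 l' i' / net.σ l') :=
    fun l' i' => cond_of_floor_lt (net.hσ l') (net.ht l') (h0strict l' i')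
  have hfin0 : net.Delay p0 ≠ ⊤ := by
    simp only [NetT.Delay]
    rw [if_pos (by exact_mod_cast hcond0)]
    exact ofReal_ne_top
  have hle := hmin.2 p0 y0 h0feas
  have hfin : net.Delay pstar ≠ ⊤ := fun h => hfin0 (top_le_iff.mp (h ▸ hle))
  have hcond : ∀ l' i', net.t l' < (1/2) * Real.log (1 + pstar l' i' / net.σ l') := by
    by_contra h
    apply hfin
    simp only [NetT.Delay]
    rw [if_neg (by exact_mod_cast h)]
  have hposσ : ∀ l' : net.L, (0:ℝ) < net.σ l' := net.hσ
  have hppos : ∀ l' i', 0 < pstar l' i' := by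
    intro l' i'
    have h0 : 0 < net.σ l' * (Real.exp (2 * net.t l') - 1) := by
      have := exp2_sub_one_pos (net.ht l'); have := hposσ l'; positivity
    exact lt_of_lt_of_le h0 (hmin.1.2.1 l' i')
  have hupos : ∀ l' i', (0:ℝ) < 1 + pstar l' i' / net.σ l' := by
    intro l' i'
    have := hppos l' i'; have := hposσ l'; positivity
  have hfloor : ∀ l' i', net.σ l' * (Real.exp (2 * net.t l') - 1) < pstar l' i' :=
    fun l' i' => floor_lt_of_cond (net.hσ l') (hupos l' i') (hcond l' i')
  -- perturbation direction
  set e : net.L → ℝ := fun l' =>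
    (if l' = l then (1:ℝ) else 0) - net.α q * (if l' = m then 1 else 0) with he_def
  have he_bound : ∀ l', |e l'| ≤ 2 := by
    intro l'
    rw [he_def]
    simp only
    rw [abs_le]
    constructor <;> split_ifs <;> nlinarith
  set P : ℝ → net.L → Fin net.T → ℝ := fun ε l' i' =>
    pstar l' i' + ε * (e l' * (if i' = i then 1 else 0)) with hP_def
  set Y : ℝ → net.Q → Fin net.T → ℝ := fun ε q' i' =>
    ystar q' i' - ε * ((if q' = q then (1:ℝ) else 0) * (if i' = i then 1 else 0)) with hY_def
  set δ : ℝ := min (ystar q i)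
      (Finset.univ.inf' ⟨l, Finset.mem_univ l⟩
        (fun l' => (pstar l' i - net.σ l' * (Real.exp (2 * net.t l') - 1)) / 2)) with hδ_def
  have hδpos : 0 < δ := by
    apply lt_min hy
    refine (Finset.lt_inf'_iff _).2 ?_
    intro l' _
    have := hfloor l' i
    linarith
  have hδy : δ ≤ ystar q i := min_le_left _ _
  have hδgap : ∀ l', δ ≤ (pstar l' i - net.σ l' * (Real.exp (2 * net.t l') - 1)) / 2 :=
    fun l' => le_trans (min_le_right _ _) (Finset.inf'_le _ (Finset.mem_univ l'))
  -- the key feasibility claim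
  have hkey : ∀ ε : ℝ, |ε| < δ →
      net.Feasible (P ε) (Y ε) ∧
      ∀ l' i', net.t l' < (1/2) * Real.log (1 + P ε l' i' / net.σ l') := by
    intro ε hε
    have hPfloor : ∀ (l' : net.L) (i' : Fin net.T),
        net.σ l' * (Real.exp (2 * net.t l') - 1) < P ε l' i' := by
      intro l' i'
      by_cases hii : i' = i
      · subst hii
        have h1 := he_bound l'
        have h2 := hδgap l'
        have h3 : -(|ε| * |e l'|) ≤ ε * e l' := by rw [← abs_mul]; exact neg_abs_le _
        have h4 : |ε| * |e l'| ≤ |ε| * 2 := by nlinarith [abs_nonneg ε]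
        have hPe : P ε l' i' = pstar l' i' + ε * e l' := by simp [hP_def]
        rw [hPe]
        linarith
      · have hPe : P ε l' i' = pstar l' i' := by simp [hP_def, hii]
        rw [hPe]; exact hfloor l' i'
    refine ⟨⟨?_, fun l' i' => le_of_lt (hPfloor l' i'), ?_⟩,
      fun l' i' => cond_of_floor_lt (net.hσ l') (net.ht l') (hPfloor l' i')⟩
    · intro q' i'
      by_cases h1 : q' = q
      · by_cases h2 : i' = i
        · subst h1; subst h2
          have hYe : Y ε q' i' = ystar q' i' - ε := by simp [hY_def]
          rw [hYe]
          have := (abs_lt.mp hε).2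
          linarith
        · have hYe : Y ε q' i' = ystar q' i' := by simp [hY_def, h2]
          rw [hYe]; exact hmin.1.1 q' i'
      · have hYe : Y ε q' i' = ystar q' i' := by simp [hY_def, h1]
        rw [hYe]; exact hmin.1.1 q' i'
    · intro n k
      have hbase := hmin.1.2.2 n k
      have hS : (∑ l' ∈ Finset.univ.filter (fun l'' => net.startD l'' = n), e l')
          = (if net.startE q = n then (1:ℝ) else 0)
            - net.α q * (if net.endE q = n then 1 else 0) := by
        simp only [he_def]
        rw [Finset.sum_sub_distrib, ← Finset.mul_sum,
          Finset.sum_ite_eq' _ l (fun _ => (1:ℝ)), Finset.sum_ite_eq' _ m (fun _ => (1:ℝ))]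
        simp [Finset.mem_filter, hl, hm]
      have hsumP : ∀ i' : Fin net.T,
          (∑ l' ∈ Finset.univ.filter (fun l'' => net.startD l'' = n), P ε l' i')
          = (∑ l' ∈ Finset.univ.filter (fun l'' => net.startD l'' = n), pstar l' i')
            + (if i' = i then ε * ((if net.startE q = n then (1:ℝ) else 0)
                - net.α q * (if net.endE q = n then 1 else 0)) else 0) := by
        intro i'
        by_cases hii : i' = i
        · subst hii
          rw [if_pos rfl]
          have hPe : ∀ l', P ε l' i' = pstar l' i' + ε * e l' := fun l' => by simp [hP_def]
          rw [Finset.sum_congr rfl (fun l' _ => hPe l'), Finset.sum_add_distrib,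
            ← Finset.mul_sum, hS]
        · rw [if_neg hii]
          have hPe : ∀ l', P ε l' i' = pstar l' i' := fun l' => by simp [hP_def, hii]
          rw [Finset.sum_congr rfl (fun l' _ => hPe l'), add_zero]
      have hsumY : ∀ i' : Fin net.T,
          (∑ q' ∈ Finset.univ.filter (fun q'' => net.startE q'' = n), Y ε q' i')
          = (∑ q' ∈ Finset.univ.filter (fun q'' => net.startE q'' = n), ystar q' i')
            - (if i' = i then ε * (if net.startE q = n then (1:ℝ) else 0) else 0) := by
        intro i'
        by_cases hii : i' = i
        · subst hii; rw [if_pos rfl]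
          have hYe : ∀ q', Y ε q' i' = ystar q' i' - (if q' = q then ε else 0) := fun q' => by
            by_cases h : q' = q <;> simp [hY_def, h]
          rw [Finset.sum_congr rfl (fun q' _ => hYe q'), Finset.sum_sub_distrib,
            Finset.sum_ite_eq' _ q (fun _ => ε)]
          congr 1
          simp only [Finset.mem_filter, Finset.mem_univ, true_and]
          split_ifs <;> ring
        · rw [if_neg hii]
          have hYe : ∀ q', Y ε q' i' = ystar q' i' := fun q' => by simp [hY_def, hii]
          rw [Finset.sum_congr rfl (fun q' _ => hYe q'), sub_zero]
      have hsumR : ∀ i' : Fin net.T,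
          (∑ q' ∈ Finset.univ.filter (fun q'' => net.endE q'' = n), net.α q' * Y ε q' i')
          = (∑ q' ∈ Finset.univ.filter (fun q'' => net.endE q'' = n), net.α q' * ystar q' i')
            - (if i' = i then ε * (net.α q * (if net.endE q = n then 1 else 0)) else 0) := by
        intro i'
        by_cases hii : i' = i
        · subst hii; rw [if_pos rfl]
          have hYe : ∀ q', net.α q' * Y ε q' i'
              = net.α q' * ystar q' i' - (if q' = q then net.α q * ε else 0) := fun q' => by
            by_cases h : q' = q
            · subst h; simp [hY_def]; ring
            · simp [hY_def, h]
          rw [Finset.sum_congr rfl (fun q' _ => hYe q'), Finset.sum_sub_distrib,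
            Finset.sum_ite_eq' _ q (fun _ => net.α q * ε)]
          congr 1
          simp only [Finset.mem_filter, Finset.mem_univ, true_and]
          split_ifs <;> ring
        · rw [if_neg hii]
          have hYe : ∀ q', net.α q' * Y ε q' i' = net.α q' * ystar q' i' := fun q' => by
            simp [hY_def, hii]
          rw [Finset.sum_congr rfl (fun q' _ => hYe q'), sub_zero]
      have hL : (∑ i' ∈ Finset.Iic k,
            ((∑ l' ∈ Finset.univ.filter (fun l'' => net.startD l'' = n), P ε l' i')
              + ∑ q' ∈ Finset.univ.filter (fun q'' => net.startE q'' = n), Y ε q' i'))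
          = (∑ i' ∈ Finset.Iic k,
              ((∑ l' ∈ Finset.univ.filter (fun l'' => net.startD l'' = n), pstar l' i')
                + ∑ q' ∈ Finset.univ.filter (fun q'' => net.startE q'' = n), ystar q' i'))
            + (if i ∈ Finset.Iic k then
                ε * ((if net.startE q = n then (1:ℝ) else 0)
                  - net.α q * (if net.endE q = n then 1 else 0))
                - ε * (if net.startE q = n then (1:ℝ) else 0) else 0) := by
        have hterm : ∀ i' ∈ Finset.Iic k,
            ((∑ l' ∈ Finset.univ.filter (fun l'' => net.startD l'' = n), P ε l' i')
              + ∑ q' ∈ Finset.univ.filter (fun q'' => net.startE q'' = n), Y ε q' i')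
            = ((∑ l' ∈ Finset.univ.filter (fun l'' => net.startD l'' = n), pstar l' i')
                + ∑ q' ∈ Finset.univ.filter (fun q'' => net.startE q'' = n), ystar q' i')
              + (if i' = i then
                  ε * ((if net.startE q = n then (1:ℝ) else 0)
                    - net.α q * (if net.endE q = n then 1 else 0))
                  - ε * (if net.startE q = n then (1:ℝ) else 0) else 0) := by
          intro i' _
          rw [hsumP i', hsumY i']
          by_cases hii : i' = i
          · rw [if_pos hii, if_pos hii, if_pos hii]; ring
          · rw [if_neg hii, if_neg hii, if_neg hii]; ring
        rw [Finset.sum_congr rfl hterm, Finset.sum_add_distrib,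
          Finset.sum_ite_eq' (Finset.Iic k) i]
      have hR : (∑ i' ∈ Finset.Iic k,
            (net.E n i' + ∑ q' ∈ Finset.univ.filter (fun q'' => net.endE q'' = n),
              net.α q' * Y ε q' i'))
          = (∑ i' ∈ Finset.Iic k,
              (net.E n i' + ∑ q' ∈ Finset.univ.filter (fun q'' => net.endE q'' = n),
                net.α q' * ystar q' i'))
            - (if i ∈ Finset.Iic k then
                ε * (net.α q * (if net.endE q = n then (1:ℝ) else 0)) else 0) := by
        have hterm : ∀ i' ∈ Finset.Iic k,
            (net.E n i' + ∑ q' ∈ Finset.univ.filter (fun q'' => net.endE q'' = n),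
              net.α q' * Y ε q' i')
            = (net.E n i' + ∑ q' ∈ Finset.univ.filter (fun q'' => net.endE q'' = n),
                net.α q' * ystar q' i')
              - (if i' = i then
                  ε * (net.α q * (if net.endE q = n then (1:ℝ) else 0)) else 0) := by
          intro i' _
          rw [hsumR i']
          ring
        rw [Finset.sum_congr rfl hterm, Finset.sum_sub_distrib,
          Finset.sum_ite_eq' (Finset.Iic k) i]
      rw [hL, hR]
      by_cases hik : i ∈ Finset.Iic k
      · rw [if_pos hik, if_pos hik]
        have hC : ε * ((if net.startE q = n then (1:ℝ) else 0)
              - net.α q * (if net.endE q = n then 1 else 0))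
            - ε * (if net.startE q = n then (1:ℝ) else 0)
            = -(ε * (net.α q * (if net.endE q = n then (1:ℝ) else 0))) := by ring
        linarith
      · rw [if_neg hik, if_neg hik]
        simpa using hbase
  -- Delay along perturbation
  set Φ : ℝ → ℝ := fun ε => ∑ i', ∑ l', fTerm (net.t l') (net.σ l') (P ε l' i') with hΦ_def
  have hP0 : P 0 = pstar := by funext l' i'; simp [hP_def]
  have hDelayP : ∀ ε, |ε| < δ → net.Delay (P ε) = ENNReal.ofReal (Φ ε) := by
    intro ε hε
    simp only [NetT.Delay]
    rw [if_pos (by exact_mod_cast (hkey ε hε).2)]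
    rfl
  have hΦnonneg : ∀ ε, |ε| < δ → 0 ≤ Φ ε := by
    intro ε hε
    apply Finset.sum_nonneg; intro i' _
    apply Finset.sum_nonneg; intro l' _
    have hden := (hkey ε hε).2 l' i'
    have ht := net.ht l'
    unfold fTerm
    have hd : 0 < (1/2) * Real.log (1 + P ε l' i' / net.σ l') - net.t l' := by linarith
    positivity
  have hlocal : IsLocalMin Φ 0 := by
    rw [IsLocalMin, IsMinFilter]
    rw [Metric.eventually_nhds_iff]
    refine ⟨δ, hδpos, fun {ε} hε => ?_⟩
    rw [Real.dist_eq, sub_zero] at hε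
    have h1 := hmin.2 (P ε) (Y ε) (hkey ε hε).1
    rw [hDelayP ε hε] at h1
    have h0 : net.Delay pstar = ENNReal.ofReal (Φ 0) := by
      rw [← hP0]; exact hDelayP 0 (by simpa using hδpos)
    rw [h0] at h1
    exact (ENNReal.ofReal_le_ofReal_iff (hΦnonneg ε hε)).mp h1
  -- Derivative of Φ at 0
  have hderiv : HasDerivAt Φ
      (∑ i' : Fin net.T, ∑ l' : net.L,
        (-gMarg (net.t l') (net.σ l') (pstar l' i')) * (e l' * (if i' = i then 1 else 0))) 0 := by
    have hterm : ∀ (i' : Fin net.T) (l' : net.L),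
        HasDerivAt (fun ε => fTerm (net.t l') (net.σ l') (P ε l' i'))
          ((-gMarg (net.t l') (net.σ l') (pstar l' i')) * (e l' * (if i' = i then 1 else 0))) 0 := by
      intro i' l'
      set c := e l' * (if i' = i then (1:ℝ) else 0) with hc
      have hinner : HasDerivAt (fun ε : ℝ => pstar l' i' + ε * c) c 0 := by
        simpa using ((hasDerivAt_id (0:ℝ)).mul_const c).const_add (pstar l' i')
      have hden : (1/2) * Real.log (1 + pstar l' i' / net.σ l') - net.t l' ≠ 0 :=
        ne_of_gt (by have := hcond l' i'; linarith)
      have hf := fTerm_hasDerivAt (net.hσ l') (hupos l' i') hden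
      have hf' : HasDerivAt (fTerm (net.t l') (net.σ l'))
          (-gMarg (net.t l') (net.σ l') (pstar l' i'))
          ((fun ε : ℝ => pstar l' i' + ε * c) 0) := by simpa using hf
      have hcomp := hf'.comp 0 hinner
      have : (fun ε : ℝ => fTerm (net.t l') (net.σ l') (P ε l' i'))
          = (fTerm (net.t l') (net.σ l')) ∘ (fun ε : ℝ => pstar l' i' + ε * c) := by
        funext ε; simp [hP_def, Function.comp, hc]
      rw [this]
      convert hcomp using 1
    exact HasDerivAt.fun_sum (fun i' _ => HasDerivAt.fun_sum (fun l' _ => hterm i' l'))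
  have hD0 : (∑ i' : Fin net.T, ∑ l' : net.L,
      (-gMarg (net.t l') (net.σ l') (pstar l' i')) * (e l' * (if i' = i then 1 else 0))) = 0 := by
    rw [← hderiv.deriv]
    exact hlocal.deriv_eq_zero
  -- simplify the derivative value
  have hsimp : (∑ i' : Fin net.T, ∑ l' : net.L,
      (-gMarg (net.t l') (net.σ l') (pstar l' i')) * (e l' * (if i' = i then 1 else 0)))
      = -gMarg (net.t l) (net.σ l) (pstar l i)
        + net.α q * gMarg (net.t m) (net.σ m) (pstar m i) := by
    have h1 : ∀ i' : Fin net.T, (∑ l' : net.L,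
        (-gMarg (net.t l') (net.σ l') (pstar l' i')) * (e l' * (if i' = i then 1 else 0)))
        = (if i' = i then (∑ l' : net.L,
            (-gMarg (net.t l') (net.σ l') (pstar l' i)) * e l') else 0) := by
      intro i'
      by_cases h : i' = i <;> simp [h]
    rw [Finset.sum_congr rfl (fun i' _ => h1 i'),
      Finset.sum_ite_eq' Finset.univ i
        (fun i' => ∑ l' : net.L, (-gMarg (net.t l') (net.σ l') (pstar l' i)) * e l')]
    simp only [Finset.mem_univ, if_true, he_def]
    have hexp : ∀ l' : net.L, (-gMarg (net.t l') (net.σ l') (pstar l' i)) *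
        ((if l' = l then (1:ℝ) else 0) - net.α q * (if l' = m then 1 else 0))
        = (if l' = l then -gMarg (net.t l') (net.σ l') (pstar l' i) else 0)
          + (if l' = m then net.α q * gMarg (net.t l') (net.σ l') (pstar l' i) else 0) := by
      intro l'
      by_cases hc1 : l' = l <;> by_cases hc2 : l' = m
      · rw [if_pos hc1, if_pos hc2, if_pos hc1, if_pos hc2]; ring
      · rw [if_pos hc1, if_neg hc2, if_pos hc1, if_neg hc2]; ring
      · rw [if_neg hc1, if_pos hc2, if_neg hc1, if_pos hc2]; ring
      · rw [if_neg hc1, if_neg hc2, if_neg hc1, if_neg hc2]; ring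
    rw [Finset.sum_congr rfl (fun l' _ => hexp l'), Finset.sum_add_distrib,
      Finset.sum_ite_eq' Finset.univ l (fun l' => -gMarg (net.t l') (net.σ l') (pstar l' i)),
      Finset.sum_ite_eq' Finset.univ m
        (fun l' => net.α q * gMarg (net.t l') (net.σ l') (pstar l' i))]
    simp
  rw [hsimp] at hD0
  linarith
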